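/- The function g(θ) = (u_π − u_θ)/d(θ) is strictly decreasing on (0, ∞), where u_θ = −b'(θ) is the mean of the tilted distribution τ_θ and d(θ) = θ·b'(θ) − b(θ) is its KL divergence from π. -/

import Mathlib

open Finset Real

noncomputable def Zf (U : Finset ℝ) (p : ℝ → ℝ) (t : ℝ) : ℝ :=
  ∑ u ∈ U, p u * Real.exp (-t * u)

noncomputable def Z1f (U : Finset ℝ) (p : ℝ → ℝ) (t : ℝ) : ℝ :=
  ∑ u ∈ U, p u * -u * Real.exp (-t * u)

noncomputable def Z2f (U : Finset ℝ) (p : ℝ → ℝ) (t : ℝ) : ℝ :=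
  ∑ u ∈ U, p u * -u * -u * Real.exp (-t * u)

lemma Zf_pos (U : Finset ℝ) (hU : U.Nonempty) (p : ℝ → ℝ) (hpos : ∀ u ∈ U, 0 < p u) (t : ℝ) :
    0 < Zf U p t :=
  Finset.sum_pos (fun u hu => mul_pos (hpos u hu) (Real.exp_pos _)) hU

lemma term_deriv (c u t : ℝ) :
    HasDerivAt (fun s : ℝ => c * Real.exp (-s * u)) (c * -u * Real.exp (-t * u)) t := by
  have hlin : HasDerivAt (fun s : ℝ => -s * u) (-u) t := by
    simpa using (hasDerivAt_id t).neg.mul_const u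
  have := hlin.exp.const_mul c
  refine this.congr_deriv ?_
  ring

lemma hasDerivAt_Zf (U : Finset ℝ) (p : ℝ → ℝ) (t : ℝ) :
    HasDerivAt (Zf U p) (Z1f U p t) t := by
  unfold Zf Z1f
  exact HasDerivAt.fun_sum (fun u _ => term_deriv (p u) u t)

lemma hasDerivAt_Z1f (U : Finset ℝ) (p : ℝ → ℝ) (t : ℝ) :
    HasDerivAt (Z1f U p) (Z2f U p t) t := by
  unfold Z1f Z2f
  exact HasDerivAt.fun_sum (fun u _ => term_deriv (p u * -u) u t)

lemma variance_pos (U : Finset ℝ) (p : ℝ → ℝ) (hpos : ∀ u ∈ U, 0 < p u)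
    (h2 : ∃ u ∈ U, ∃ v ∈ U, u ≠ v) (t : ℝ) :
    0 < Z2f U p t * Zf U p t - Z1f U p t ^ 2 := by
  obtain ⟨a, ha, c, hc, hac⟩ := h2
  set W : ℝ → ℝ := fun u => p u * Real.exp (-t * u) with hW
  have hWpos : ∀ u ∈ U, 0 < W u := fun u hu => mul_pos (hpos u hu) (Real.exp_pos _)
  have hQ : Z1f U p t = -∑ u ∈ U, u * W u := by
    rw [← Finset.sum_neg_distrib]
    exact Finset.sum_congr rfl fun u _ => by rw [hW]; ring
  have hZW : Zf U p t = ∑ u ∈ U, W u := rfl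
  have hZ2W : Z2f U p t = ∑ u ∈ U, u * u * W u :=
    Finset.sum_congr rfl fun u _ => by rw [hW]; ring
  have key : ∑ u ∈ U, ∑ v ∈ U, W u * W v * (u - v) ^ 2
      = 2 * ((∑ u ∈ U, u * u * W u) * (∑ u ∈ U, W u) - (∑ u ∈ U, u * W u) ^ 2) := by
    calc ∑ u ∈ U, ∑ v ∈ U, W u * W v * (u - v) ^ 2
        = ∑ u ∈ U, ∑ v ∈ U,
            ((u * u * W u) * W v - 2 * ((u * W u) * (v * W v)) + W u * (v * v * W v)) :=
          Finset.sum_congr rfl fun u _ => Finset.sum_congr rfl fun v _ => by ring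
      _ = 2 * ((∑ u ∈ U, u * u * W u) * (∑ u ∈ U, W u) - (∑ u ∈ U, u * W u) ^ 2) := by
          simp only [Finset.sum_add_distrib, Finset.sum_sub_distrib, ← Finset.mul_sum,
            ← Finset.sum_mul]
          ring
  have hpos2 : 0 < ∑ u ∈ U, ∑ v ∈ U, W u * W v * (u - v) ^ 2 := by
    apply Finset.sum_pos'
    · intro u hu
      exact Finset.sum_nonneg fun v hv =>
        mul_nonneg (mul_nonneg (hWpos u hu).le (hWpos v hv).le) (sq_nonneg _)
    · refine ⟨a, ha, Finset.sum_pos' (fun v hv =>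
        mul_nonneg (mul_nonneg (hWpos a ha).le (hWpos v hv).le) (sq_nonneg _)) ⟨c, hc, ?_⟩⟩
      have hac' : a - c ≠ 0 := sub_ne_zero.mpr hac
      exact mul_pos (mul_pos (hWpos a ha) (hWpos c hc)) (by positivity)
  rw [key] at hpos2
  have hsq : Z1f U p t ^ 2 = (∑ u ∈ U, u * W u) ^ 2 := by rw [hQ, neg_sq]
  rw [hZW, hZ2W, hsq]
  linarith

/-- The function `g(θ) = (u_p − u_θ)/d(θ)` is strictly decreasing
on `(0, ∞)`, where `u_θ = −b'(θ)` is the mean of the tilted distribution and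
`d(θ) = θ·b'(θ) − b(θ)` is its KL divergence from `p`. -/
theorem impact_ratio_strictAnti (U : Finset ℝ) (hU : U.Nonempty)
    (p : ℝ → ℝ) (hpos : ∀ u ∈ U, 0 < p u) (hsum : ∑ u ∈ U, p u = 1)
    (h2 : ∃ u ∈ U, ∃ v ∈ U, u ≠ v)
    (b : ℝ → ℝ) (hb : ∀ t : ℝ, b t = Real.log (∑ u ∈ U, p u * Real.exp (-t * u)))
    (g : ℝ → ℝ)
    (hg : ∀ t : ℝ, g t =
      ((∑ u ∈ U, u * p u) - (-(deriv b t))) / (t * deriv b t - b t)) :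
    StrictAntiOn g (Set.Ioi (0 : ℝ)) := by
  have hZpos : ∀ t, 0 < Zf U p t := Zf_pos U hU p hpos
  have hVpos : ∀ t, 0 < (Z2f U p t * Zf U p t - Z1f U p t ^ 2) / Zf U p t ^ 2 :=
    fun t => div_pos (variance_pos U p hpos h2 t) (pow_pos (hZpos t) 2)
  have hbZ : b = fun t => Real.log (Zf U p t) := funext fun t => hb t
  have hb' : ∀ t, HasDerivAt b (Z1f U p t / Zf U p t) t := by
    intro t
    rw [hbZ]
    exact (hasDerivAt_Zf U p t).log (ne_of_gt (hZpos t))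
  have hdb : ∀ t, deriv b t = Z1f U p t / Zf U p t := fun t => (hb' t).deriv
  have hdb' : ∀ t, HasDerivAt (deriv b)
      ((Z2f U p t * Zf U p t - Z1f U p t ^ 2) / Zf U p t ^ 2) t := by
    intro t
    have h := (hasDerivAt_Z1f U p t).div (hasDerivAt_Zf U p t) (ne_of_gt (hZpos t))
    have he : deriv b = fun s => Z1f U p s / Zf U p s := funext hdb
    rw [he]
    refine h.congr_deriv ?_
    ring
  have hmono : StrictMono (deriv b) :=
    strictMono_of_deriv_pos (fun t => by rw [(hdb' t).deriv]; exact hVpos t)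
  have hZ0 : Zf U p 0 = 1 := by
    unfold Zf
    simpa using hsum
  have hb0 : b 0 = 0 := by rw [hbZ]; simp [hZ0]
  -- derivative of d
  have hd' : ∀ t, HasDerivAt (fun s => s * deriv b s - b s)
      (t * ((Z2f U p t * Zf U p t - Z1f U p t ^ 2) / Zf U p t ^ 2)) t := by
    intro t
    have h := ((hasDerivAt_id t).mul (hdb' t)).sub (hb' t)
    refine h.congr_deriv ?_
    rw [← hdb t]
    simp only [id_eq]
    ring
  have hdiffd : Differentiable ℝ (fun s => s * deriv b s - b s) :=
    fun t => (hd' t).differentiableAt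
  have hdmono : StrictMonoOn (fun s => s * deriv b s - b s) (Set.Ici 0) := by
    apply strictMonoOn_of_deriv_pos (convex_Ici 0) hdiffd.continuous.continuousOn
    intro x hx
    rw [interior_Ici] at hx
    rw [(hd' x).deriv]
    exact mul_pos hx (hVpos x)
  have hdpos : ∀ t ∈ Set.Ioi (0 : ℝ), 0 < t * deriv b t - b t := by
    intro t ht
    have := hdmono (Set.self_mem_Ici) (Set.mem_Ici.mpr (le_of_lt ht)) ht
    simpa [hb0] using this
  -- tangent line inequality: t * deriv b 0 < b t for t > 0
  have htan' : ∀ t, HasDerivAt (fun s => b s - s * deriv b 0)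
      (deriv b t - deriv b 0) t := by
    intro t
    have h := (hb' t).sub ((hasDerivAt_id t).mul_const (deriv b 0))
    refine h.congr_deriv ?_
    rw [← hdb t]
    ring
  have htanmono : StrictMonoOn (fun s => b s - s * deriv b 0) (Set.Ici 0) := by
    apply strictMonoOn_of_deriv_pos (convex_Ici 0)
      (fun t _ => ((htan' t).differentiableAt).continuousAt.continuousWithinAt)
    intro x hx
    rw [interior_Ici] at hx
    rw [(htan' x).deriv]
    exact sub_pos.mpr (hmono hx)
  have htan : ∀ t ∈ Set.Ioi (0 : ℝ), t * deriv b 0 < b t := by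
    intro t ht
    have := htanmono (Set.self_mem_Ici) (Set.mem_Ici.mpr (le_of_lt ht)) ht
    simpa [hb0] using sub_pos.mp (by simpa [hb0] using this)
  -- rewrite g
  have hC : (∑ u ∈ U, u * p u) = -(deriv b 0) := by
    have h1 : Z1f U p 0 = -∑ u ∈ U, u * p u := by
      unfold Z1f
      rw [← Finset.sum_neg_distrib]
      exact Finset.sum_congr rfl fun u _ => by simp; ring
    rw [hdb 0, hZ0, h1]
    ring
  have hgN : g = fun t => (deriv b t - deriv b 0) / (t * deriv b t - b t) := by
    funext t
    rw [hg t, hC]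
    ring_nf
  rw [hgN]
  apply strictAntiOn_of_deriv_neg (convex_Ioi 0)
  · apply ContinuousOn.div
    · have hdiffdb : Differentiable ℝ (deriv b) := fun t => (hdb' t).differentiableAt
      exact (hdiffdb.continuous.sub continuous_const).continuousOn
    · exact hdiffd.continuous.continuousOn
    · exact fun x hx => ne_of_gt (hdpos x hx)
  · intro x hx
    rw [interior_Ioi] at hx
    have hdne : x * deriv b x - b x ≠ 0 := ne_of_gt (hdpos x hx)
    have hnum : HasDerivAt (fun s => deriv b s - deriv b 0)
        ((Z2f U p x * Zf U p x - Z1f U p x ^ 2) / Zf U p x ^ 2) x := (hdb' x).sub_const _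
    have h := hnum.div (hd' x) hdne
    rw [HasDerivAt.deriv (f := fun t => (deriv b t - deriv b 0) / (t * deriv b t - b t)) h]
    apply div_neg_of_neg_of_pos
    · have h1 : x * deriv b 0 - b x < 0 := sub_neg.mpr (htan x hx)
      have h2 := hVpos x
      nlinarith
    · exact pow_pos (hdpos x hx) 2
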